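/- Let g : ℝ → ℝ be a nonnegative C² function, let ω > 0, 0 < a < 1 and C > 0. Assume that −g''(x) + ω² g(x) ≤ C ω² e^{−aω|x|} for every x ∈ ℝ, that (g'(x) + ω g(x)) e^{−ωx} → 0 as x → +∞, and that (g'(x) − ω g(x)) e^{ωx} → 0 as x → −∞. Then g(x) ≤ (g(0) + C/(1 − a²)) e^{−aω|x|} for every x ∈ ℝ. -/

import Mathlib

open Real Filter Topology

-- derivative of exp(-(c*x))
lemma hasDerivAt_exp_neg_const_mul (c x : ℝ) :
    HasDerivAt (fun y : ℝ => Real.exp (-(c * y))) (-c * Real.exp (-(c * x))) x := by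
  have h1 : HasDerivAt (fun y : ℝ => -(c * y)) (-c) x := by
    simpa [neg_mul] using (hasDerivAt_id x).const_mul (-c)
  simpa [mul_comm] using h1.exp

lemma hasDerivAt_exp_const_mul (c x : ℝ) :
    HasDerivAt (fun y : ℝ => Real.exp (c * y)) (c * Real.exp (c * x)) x := by
  have h1 : HasDerivAt (fun y : ℝ => c * y) c x := by
    simpa using (hasDerivAt_id x).const_mul c
  simpa [mul_comm] using h1.exp

lemma aux_halfline (g : ℝ → ℝ) (ω a C : ℝ)
    (hg : ContDiff ℝ 2 g) (hg0 : 0 ≤ g 0)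
    (hω : 0 < ω) (ha0 : 0 < a) (ha1 : a < 1) (hC : 0 < C)
    (hineq : ∀ x : ℝ, 0 ≤ x →
      -(deriv (deriv g) x) + ω ^ 2 * g x ≤ C * ω ^ 2 * Real.exp (-(a * ω * x)))
    (hlim : Tendsto (fun x => (deriv g x + ω * g x) * Real.exp (-(ω * x))) atTop (𝓝 0)) :
    ∀ x : ℝ, 0 ≤ x → g x ≤ (g 0 + C / (1 - a ^ 2)) * Real.exp (-(a * ω * x)) := by
  have ha2 : 0 < 1 - a ^ 2 := by nlinarith
  set M : ℝ := g 0 + C / (1 - a ^ 2) with hM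
  have hMC : C ≤ M * (1 - a ^ 2) := by
    have : M * (1 - a ^ 2) = g 0 * (1 - a ^ 2) + C := by
      rw [hM, add_mul, div_mul_cancel₀ _ ha2.ne']
    nlinarith
  -- differentiability facts for g
  have hgd : Differentiable ℝ g := hg.differentiable (by norm_num)
  have hgd2 : Differentiable ℝ (deriv g) := by
    have := (contDiff_succ_iff_deriv.mp (show ContDiff ℝ (1+1) g by norm_num [hg])).2.2
    exact this.differentiable (by norm_num)
  set F : ℝ → ℝ := fun x =>
    (M * (ω - a * ω) * Real.exp (-(a * ω * x)) - (deriv g x + ω * g x)) * Real.exp (-(ω * x))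
    with hF
  have hFderiv : ∀ x : ℝ, HasDerivAt F
      ((M * (ω - a * ω) * (-(a * ω) * Real.exp (-(a * ω * x)))
        - (deriv (deriv g) x + ω * deriv g x)) * Real.exp (-(ω * x))
       + (M * (ω - a * ω) * Real.exp (-(a * ω * x)) - (deriv g x + ω * g x))
         * (-ω * Real.exp (-(ω * x)))) x := by
    intro x
    have h1 : HasDerivAt (fun y => M * (ω - a * ω) * Real.exp (-(a * ω * y)))
        (M * (ω - a * ω) * (-(a * ω) * Real.exp (-(a * ω * x)))) x :=
      (hasDerivAt_exp_neg_const_mul (a * ω) x).const_mul (M * (ω - a * ω))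
    have h2 : HasDerivAt (fun y => deriv g y + ω * g y)
        (deriv (deriv g) x + ω * deriv g x) x :=
      ((hgd2 x).hasDerivAt).add (((hgd x).hasDerivAt).const_mul ω)
    exact (h1.sub h2).mul (hasDerivAt_exp_neg_const_mul ω x)
  have hFdiff : Differentiable ℝ F := fun x => (hFderiv x).differentiableAt
  -- deriv F ≤ 0 on [0,∞)
  have hFle : ∀ x : ℝ, 0 ≤ x → deriv F x ≤ 0 := by
    intro x hx
    rw [(hFderiv x).deriv]
    have hkey : (M * (ω - a * ω) * (-(a * ω) * Real.exp (-(a * ω * x)))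
        - (deriv (deriv g) x + ω * deriv g x)) * Real.exp (-(ω * x))
       + (M * (ω - a * ω) * Real.exp (-(a * ω * x)) - (deriv g x + ω * g x))
         * (-ω * Real.exp (-(ω * x)))
       = ((-(deriv (deriv g) x) + ω ^ 2 * g x)
          - M * ω ^ 2 * (1 - a ^ 2) * Real.exp (-(a * ω * x))) * Real.exp (-(ω * x)) := by
      ring
    rw [hkey]
    have h1 := hineq x hx
    have h2 : C * ω ^ 2 ≤ M * ω ^ 2 * (1 - a ^ 2) := by nlinarith [sq_nonneg ω]
    have h3 : (-(deriv (deriv g) x) + ω ^ 2 * g x)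
        ≤ M * ω ^ 2 * (1 - a ^ 2) * Real.exp (-(a * ω * x)) := by
      calc -(deriv (deriv g) x) + ω ^ 2 * g x ≤ C * ω ^ 2 * Real.exp (-(a * ω * x)) := h1
        _ ≤ M * ω ^ 2 * (1 - a ^ 2) * Real.exp (-(a * ω * x)) := by
            have := Real.exp_pos (-(a * ω * x))
            nlinarith
    have h4 : (0:ℝ) < Real.exp (-(ω * x)) := Real.exp_pos _
    nlinarith
  -- F tends to 0 at +∞
  have hFlim : Tendsto F atTop (𝓝 0) := by
    have e1 : Tendsto (fun x : ℝ => Real.exp (-((a * ω + ω) * x))) atTop (𝓝 0) := by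
      have h : Tendsto (fun x : ℝ => (a * ω + ω) * x) atTop atTop :=
        Tendsto.const_mul_atTop (by positivity) tendsto_id
      simpa using h
    have e2 : Tendsto (fun x : ℝ => M * (ω - a * ω) * Real.exp (-((a * ω + ω) * x)))
        atTop (𝓝 0) := by
      simpa using e1.const_mul (M * (ω - a * ω))
    have := e2.sub hlim
    simp only [sub_zero] at this
    apply this.congr
    intro x
    rw [hF]
    simp only
    rw [show -((a * ω + ω) * x) = -(a * ω * x) + -(ω * x) by ring, Real.exp_add]
    ring
  -- F ≥ 0 on [0,∞) since F is antitone on [0,∞) with limit 0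
  have hFanti : AntitoneOn F (Set.Ici (0:ℝ)) := by
    apply antitoneOn_of_deriv_nonpos (convex_Ici 0) hFdiff.continuous.continuousOn
      (hFdiff.differentiableOn)
    intro x hx
    rw [interior_Ici] at hx
    exact hFle x (le_of_lt hx)
  have hFnonneg : ∀ x : ℝ, 0 ≤ x → 0 ≤ F x := by
    intro x hx
    refine le_of_tendsto hFlim ?_
    filter_upwards [eventually_ge_atTop x] with y hy
    exact hFanti (Set.mem_Ici.mpr hx) (Set.mem_Ici.mpr (hx.trans hy)) hy
  -- G
  set G : ℝ → ℝ := fun x => (M * Real.exp (-(a * ω * x)) - g x) * Real.exp (ω * x) with hG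
  have hGderiv : ∀ x : ℝ, HasDerivAt G
      ((M * (-(a * ω) * Real.exp (-(a * ω * x))) - deriv g x) * Real.exp (ω * x)
       + (M * Real.exp (-(a * ω * x)) - g x) * (ω * Real.exp (ω * x))) x := by
    intro x
    have h1a : HasDerivAt (fun y => M * Real.exp (-(a * ω * y)))
        (M * (-(a * ω) * Real.exp (-(a * ω * x)))) x :=
      (hasDerivAt_exp_neg_const_mul (a * ω) x).const_mul M
    exact (h1a.sub (hgd x).hasDerivAt).mul (hasDerivAt_exp_const_mul ω x)
  have hGdiff : Differentiable ℝ G := fun x => (hGderiv x).differentiableAt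
  have hGmono : MonotoneOn G (Set.Ici (0:ℝ)) := by
    apply monotoneOn_of_deriv_nonneg (convex_Ici 0) hGdiff.continuous.continuousOn
      hGdiff.differentiableOn
    intro x hx
    rw [interior_Ici] at hx
    rw [(hGderiv x).deriv]
    -- F x ≥ 0 gives u x ≥ 0 where u = w' + ω w
    have h0 := hFnonneg x (le_of_lt hx)
    rw [hF] at h0
    simp only at h0
    have hu : 0 ≤ M * (ω - a * ω) * Real.exp (-(a * ω * x)) - (deriv g x + ω * g x) := by
      by_contra hcon
      push_neg at hcon
      nlinarith [Real.exp_pos (-(ω * x))]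
    have hexp : (0:ℝ) < Real.exp (ω * x) := Real.exp_pos _
    nlinarith
  -- conclude
  intro x hx
  have h0 : (0:ℝ) ≤ G 0 := by
    rw [hG]
    simp only [mul_zero, neg_zero, Real.exp_zero, mul_one, one_mul]
    have : (0:ℝ) ≤ C / (1 - a ^ 2) := le_of_lt (div_pos hC ha2)
    simp [hM]; linarith
  have h1 : G 0 ≤ G x := hGmono (Set.mem_Ici.mpr le_rfl) (Set.mem_Ici.mpr hx) hx
  have h2 : (0:ℝ) ≤ (M * Real.exp (-(a * ω * x)) - g x) * Real.exp (ω * x) := le_trans h0 h1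
  have hexp : (0:ℝ) < Real.exp (ω * x) := Real.exp_pos _
  nlinarith

theorem stmt_0 (g : ℝ → ℝ) (ω a C : ℝ)
    (hg : ContDiff ℝ 2 g) (hg0 : ∀ x, 0 ≤ g x)
    (hω : 0 < ω) (ha0 : 0 < a) (ha1 : a < 1) (hC : 0 < C)
    (hineq : ∀ x : ℝ,
      -(deriv (deriv g) x) + ω ^ 2 * g x ≤ C * ω ^ 2 * Real.exp (-(a * ω * |x|)))
    (hlim_top : Tendsto (fun x => (deriv g x + ω * g x) * Real.exp (-(ω * x))) atTop (𝓝 0))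
    (hlim_bot : Tendsto (fun x => (deriv g x - ω * g x) * Real.exp (ω * x)) atBot (𝓝 0)) :
    ∀ x : ℝ, g x ≤ (g 0 + C / (1 - a ^ 2)) * Real.exp (-(a * ω * |x|)) := by
  intro x
  rcases le_or_gt 0 x with hx | hx
  · rw [abs_of_nonneg hx]
    exact aux_halfline g ω a C hg (hg0 0) hω ha0 ha1 hC
      (fun y hy => by simpa [abs_of_nonneg hy] using hineq y) hlim_top x hx
  · -- apply aux to g ∘ neg
    set g' : ℝ → ℝ := fun y => g (-y) with hg'
    have hgc : ContDiff ℝ 2 g' := hg.comp contDiff_neg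
    have hd1 : ∀ y, deriv g' y = -deriv g (-y) := by
      intro y
      simpa [hg'] using deriv_comp_neg g y
    have hd2 : ∀ y, deriv (deriv g') y = deriv (deriv g) (-y) := by
      intro y
      have : deriv g' = fun z => -deriv g (-z) := funext hd1
      rw [this]
      rw [show (fun z : ℝ => -deriv g (-z)) = fun z => -(fun w => deriv g (-w)) z from rfl]
      rw [deriv.fun_neg]
      rw [deriv_comp_neg (deriv g) y]
      ring
    have hineq' : ∀ y : ℝ, 0 ≤ y →
        -(deriv (deriv g') y) + ω ^ 2 * g' y ≤ C * ω ^ 2 * Real.exp (-(a * ω * y)) := by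
      intro y hy
      rw [hd2]
      have := hineq (-y)
      simpa [hg', abs_of_nonpos (neg_nonpos.mpr hy), abs_of_nonneg hy] using this
    have hlim' : Tendsto (fun y => (deriv g' y + ω * g' y) * Real.exp (-(ω * y)))
        atTop (𝓝 0) := by
      have h1 : Tendsto (fun y : ℝ => -y) atTop atBot := tendsto_neg_atTop_atBot
      have h2 := hlim_bot.comp h1
      have h3 : Tendsto (fun y : ℝ =>
          -((deriv g (-y) - ω * g (-y)) * Real.exp (ω * -y))) atTop (𝓝 (-0)) := h2.neg
      rw [neg_zero] at h3
      apply h3.congr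
      intro y
      rw [hd1]
      simp [hg']
      ring_nf
    have := aux_halfline g' ω a C hgc (by simpa [hg'] using hg0 0) hω ha0 ha1 hC hineq' hlim'
      (-x) (by linarith)
    rw [abs_of_neg hx]
    simpa [hg'] using this
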